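/- arXiv:1602.03511 — 2 statements merged into one kernel-verified Lean document; each statement's English description precedes it below -/
import Mathlib

section
/- Let F ∈ ℝ^{3×3} with singular value decomposition F = U S Vᵀ where U, V ∈ SO(3) and S = diag(s₁, s₂, s₃). Define R_i(θ) = exp(θ (U eᵢ)^∧) U Vᵀ for i ∈ {1,2,3}. Then tr(Fᵀ R_i(θ)) = s_i + (s_j + s_k) cos θ, where (i,j,k) is a cyclic permutation of (1,2,3). -/
open Matrix Real

/-- The hat map: `hat x` is the skew-symmetric matrix with `(hat x) y = x × y`. -/
noncomputable def hat (x : Fin 3 → ℝ) : Matrix (Fin 3) (Fin 3) ℝ :=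
  !![0, -x 2, x 1; x 2, 0, -x 0; -x 1, x 0, 0]

lemma hat_conj (A : Matrix (Fin 3) (Fin 3) ℝ) (x : Fin 3 → ℝ) :
    A * hat x * Aᵀ = hat ((A.adjugate)ᵀ.mulVec x) := by
  rw [Matrix.adjugate_fin_three]
  ext i j
  fin_cases i <;> fin_cases j <;>
    simp [hat, Matrix.mul_apply, Matrix.mulVec, dotProduct, Fin.sum_univ_three] <;>
    ring

lemma hat_single_cube (i : Fin 3) :
    (hat (Pi.single i 1)) ^ 3 = -(hat (Pi.single i 1)) := by
  fin_cases i <;>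
  · ext a b
    fin_cases a <;> fin_cases b <;>
      simp [hat, Pi.single_apply, pow_succ, Matrix.mul_apply, Fin.sum_univ_three,
        Matrix.vecHead, Matrix.vecTail]

lemma exp_rot (θ : ℝ) (J : Matrix (Fin 3) (Fin 3) ℝ) (hJ : J ^ 3 = -J) :
    NormedSpace.exp (θ • J) =
      1 + Real.sin θ • J + (1 - Real.cos θ) • J ^ 2 := by
  have hodd : ∀ k : ℕ, J ^ (2 * k + 1) = ((-1 : ℝ) ^ k) • J := by
    intro k
    induction k with
    | zero => simp
    | succ n ih =>
      calc J ^ (2 * (n + 1) + 1) = J ^ (2 * n + 1) * J ^ 2 := by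
            rw [← pow_add]; ring_nf
        _ = ((-1 : ℝ) ^ n) • (J * J ^ 2) := by rw [ih, smul_mul_assoc]
        _ = ((-1 : ℝ) ^ n) • (-J) := by rw [← pow_succ' J 2, hJ]
        _ = ((-1 : ℝ) ^ (n + 1)) • J := by
            rw [pow_succ, mul_neg_one, neg_smul, smul_neg]
  have heven : ∀ k : ℕ, J ^ (2 * k + 2) = ((-1 : ℝ) ^ k) • J ^ 2 := by
    intro k
    calc J ^ (2 * k + 2) = J ^ (2 * k + 1) * J := by rw [← pow_succ]
      _ = ((-1 : ℝ) ^ k) • (J * J) := by rw [hodd, smul_mul_assoc]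
      _ = ((-1 : ℝ) ^ k) • J ^ 2 := by rw [← pow_two]
  have hcos := Real.hasSum_cos θ
  have hsin := Real.hasSum_sin θ
  have keyodd : HasSum (fun k : ℕ => ((Nat.factorial (2 * k + 1) : ℝ)⁻¹) • (θ • J) ^ (2 * k + 1))
      (Real.sin θ • J) := by
    have h := hsin.smul_const J
    have h3 : (fun n : ℕ => ((-1 : ℝ) ^ n * θ ^ (2 * n + 1) / (Nat.factorial (2 * n + 1) : ℝ)) • J)
        = fun k : ℕ => ((Nat.factorial (2 * k + 1) : ℝ)⁻¹) • (θ • J) ^ (2 * k + 1) := by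
      funext n
      rw [smul_pow, hodd n, smul_smul, smul_smul]
      congr 1
      have hne : (Nat.factorial (2 * n + 1) : ℝ) ≠ 0 := Nat.cast_ne_zero.2 (Nat.factorial_ne_zero _)
      field_simp
    rwa [h3] at h
  have keyeven : HasSum (fun k : ℕ => ((Nat.factorial (2 * k) : ℝ)⁻¹) • (θ • J) ^ (2 * k))
      (1 + (1 - Real.cos θ) • J ^ 2) := by
    have h1 : HasSum (fun n : ℕ =>
        -((-1 : ℝ) ^ (n + 1) * θ ^ (2 * (n + 1)) / (Nat.factorial (2 * (n + 1)) : ℝ)))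
        (1 - Real.cos θ) := by
      have h0' : HasSum (fun n : ℕ =>
          ((-1 : ℝ)) ^ (n + 1) * θ ^ (2 * (n + 1)) / (Nat.factorial (2 * (n + 1)) : ℝ))
          (Real.cos θ - 1) := by
        refine (hasSum_nat_add_iff
          (f := fun n : ℕ => ((-1 : ℝ)) ^ n * θ ^ (2 * n) / (Nat.factorial (2 * n) : ℝ))
          1).mpr ?_
        simpa using hcos
      simpa using h0'.neg
    have h2 := h1.smul_const (J ^ 2)
    have h3 : (fun n : ℕ =>
        (-((-1 : ℝ) ^ (n + 1) * θ ^ (2 * (n + 1)) / (Nat.factorial (2 * (n + 1)) : ℝ))) • J ^ 2)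
        = fun n : ℕ => ((Nat.factorial (2 * (n + 1)) : ℝ)⁻¹) • (θ • J) ^ (2 * (n + 1)) := by
      funext n
      have h4 : 2 * (n + 1) = 2 * n + 2 := by ring
      rw [h4, smul_pow, heven n, smul_smul, smul_smul]
      congr 1
      have hne : (Nat.factorial (2 * n + 2) : ℝ) ≠ 0 := Nat.cast_ne_zero.2 (Nat.factorial_ne_zero _)
      field_simp
      ring
    rw [h3] at h2
    have h5 := (hasSum_nat_add_iff
      (f := fun k : ℕ => ((Nat.factorial (2 * k) : ℝ)⁻¹) • (θ • J) ^ (2 * k)) 1).mp h2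
    simpa [add_comm] using h5
  have total := HasSum.even_add_odd
    (f := fun n : ℕ => ((Nat.factorial n : ℝ)⁻¹) • (θ • J) ^ n) keyeven keyodd
  rw [NormedSpace.exp_eq_tsum ℝ]
  exact total.tsum_eq.trans (by abel)

/-- For `F = U S Vᵀ` with `U, V ∈ SO(3)` and `S = diag s`, and
`Rᵢ(θ) = exp(θ (U eᵢ)^∧) U Vᵀ`, one has
`tr(Fᵀ Rᵢ(θ)) = sᵢ + (sⱼ + sₖ) cos θ` for `(i,j,k)` a cyclic permutation of `(1,2,3)`. -/
theorem trace_along_sigma_curve (U V : Matrix (Fin 3) (Fin 3) ℝ)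
    (hU : Uᵀ * U = 1 ∧ U.det = 1) (hV : Vᵀ * V = 1 ∧ V.det = 1)
    (s : Fin 3 → ℝ) (θ : ℝ) (i : Fin 3) :
    Matrix.trace ((U * Matrix.diagonal s * Vᵀ)ᵀ *
        (NormedSpace.exp (θ • hat (U.mulVec (Pi.single i 1))) * (U * Vᵀ))) =
      s i + (s (i + 1) + s (i + 2)) * Real.cos θ := by
  obtain ⟨hU1, hU2⟩ := hU
  obtain ⟨hV1, hV2⟩ := hV
  have hUUt : U * Uᵀ = 1 := mul_eq_one_comm.mp hU1
  have hVVt : V * Vᵀ = 1 := mul_eq_one_comm.mp hV1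
  have hadj : U.adjugate = Uᵀ := by
    calc U.adjugate = U.adjugate * (U * Uᵀ) := by rw [hUUt, Matrix.mul_one]
      _ = (U.adjugate * U) * Uᵀ := by rw [Matrix.mul_assoc]
      _ = Uᵀ := by rw [Matrix.adjugate_mul, hU2, one_smul, Matrix.one_mul]
  set J : Matrix (Fin 3) (Fin 3) ℝ := hat (Pi.single i 1) with hJdef
  have hhat : hat (U.mulVec (Pi.single i 1)) = U * J * Uᵀ := by
    have h := hat_conj U (Pi.single i 1)
    rw [hadj, Matrix.transpose_transpose] at h
    exact h.symm
  have hUinv : U⁻¹ = Uᵀ := Matrix.inv_eq_right_inv hUUt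
  have hUunit : IsUnit U := (Matrix.isUnit_iff_isUnit_det U).2 (by rw [hU2]; exact isUnit_one)
  set M : Matrix (Fin 3) (Fin 3) ℝ :=
    1 + Real.sin θ • J + (1 - Real.cos θ) • J ^ 2 with hMdef
  have hexp : NormedSpace.exp (θ • hat (U.mulVec (Pi.single i 1))) = U * M * Uᵀ := by
    rw [hhat]
    have h1 : θ • (U * J * Uᵀ) = U * (θ • J) * U⁻¹ := by
      rw [hUinv, Matrix.mul_smul, Matrix.smul_mul]
    rw [h1, Matrix.exp_conj U (θ • J) hUunit, hUinv, exp_rot θ J (hat_single_cube i)]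
  rw [hexp]
  have cancel : ∀ X : Matrix (Fin 3) (Fin 3) ℝ, Uᵀ * (U * X) = X := fun X => by
    rw [← Matrix.mul_assoc, hU1, Matrix.one_mul]
  have hmain : (U * Matrix.diagonal s * Vᵀ)ᵀ * (U * M * Uᵀ * (U * Vᵀ))
      = V * (Matrix.diagonal s * M) * Vᵀ := by
    have h1 : (U * Matrix.diagonal s * Vᵀ)ᵀ = V * Matrix.diagonal s * Uᵀ := by
      rw [Matrix.transpose_mul, Matrix.transpose_mul, Matrix.transpose_transpose,
        Matrix.diagonal_transpose, Matrix.mul_assoc]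
    rw [h1]
    simp only [Matrix.mul_assoc]
    rw [cancel, cancel]
  rw [hmain, Matrix.trace_mul_comm, ← Matrix.mul_assoc, hV1, Matrix.one_mul]
  fin_cases i <;>
  · simp only [hMdef, hJdef]
    simp [Matrix.trace, Matrix.diag, Matrix.mul_apply, Fin.sum_univ_three, hat,
      Pi.single_apply, pow_two, Matrix.one_apply]
    ring
end

section
/- Let F = U S Vᵀ with U, V ∈ SO(3), S = diag(s₁,s₂,s₃), M = UVᵀ, and define sigma points R_i(±θ_i) = U exp(±θ_i êᵢ) Vᵀ for i ∈ {1,2,3}. Then the arithmetic mean R̄ = (1/7)(M + Σᵢ (R_i(θ_i) + R_i(−θ_i))) equals U D Vᵀ where D = diag(d₁,d₂,d₃) with d_i = (1/7)(3 + 2 cos θ_j + 2 cos θ_k) for (i,j,k) a cyclic permutation of (1,2,3). -/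
open Matrix Real Nat

-- powers: A^(2(k+1)) = (-1)^k • A^2 when A^3 = -A
lemma pow_two_mul (A : Matrix (Fin 3) (Fin 3) ℝ) (h : A ^ 3 = -A) (k : ℕ) :
    A ^ (2 * (k + 1)) = ((-1 : ℝ) ^ k) • A ^ 2 := by
  induction k with
  | zero => simp
  | succ n ih =>
    have h4 : A ^ 4 = -(A ^ 2) := by
      rw [show (4:ℕ) = 3 + 1 from rfl, pow_succ, h]
      simp [pow_two]
    rw [show 2 * (n + 1 + 1) = 2 * (n + 1) + 2 from by ring, pow_add, ih,
      Matrix.smul_mul, ← pow_add, h4, pow_succ]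
    simp [smul_smul, pow_succ, neg_smul]

set_option maxHeartbeats 1000000 in
lemma exp_pair (A : Matrix (Fin 3) (Fin 3) ℝ) (h : A ^ 3 = -A) (t : ℝ) :
    NormedSpace.exp (t • A) + NormedSpace.exp ((-t) • A) =
      (2 : ℝ) • (1 : Matrix (Fin 3) (Fin 3) ℝ) + (2 - 2 * Real.cos t) • A ^ 2 := by
  letI : SeminormedRing (Matrix (Fin 3) (Fin 3) ℝ) := Matrix.linftyOpSemiNormedRing
  letI : NormedRing (Matrix (Fin 3) (Fin 3) ℝ) := Matrix.linftyOpNormedRing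
  letI : NormedAlgebra ℝ (Matrix (Fin 3) (Fin 3) ℝ) := Matrix.linftyOpNormedAlgebra
  -- the combined series
  set f : ℕ → Matrix (Fin 3) (Fin 3) ℝ :=
    fun n => ((Nat.factorial n : ℝ)⁻¹ • (t • A) ^ n) + ((Nat.factorial n : ℝ)⁻¹ • ((-t) • A) ^ n) with hf
  have hsum1 := NormedSpace.expSeries_summable' (𝕂 := ℝ) (t • A)
  have hsum2 := NormedSpace.expSeries_summable' (𝕂 := ℝ) ((-t) • A)
  have hsumf : Summable f := hsum1.add hsum2
  have hlhs : NormedSpace.exp (t • A) + NormedSpace.exp ((-t) • A) = ∑' n, f n := by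
    simp only [NormedSpace.exp_eq_tsum ℝ]
    exact (Summable.tsum_add hsum1 hsum2).symm
  rw [hlhs]
  -- odd terms vanish
  have hodd : ∀ k, f (2 * k + 1) = 0 := by
    intro k
    simp only [hf, smul_pow]
    rw [Odd.neg_pow ⟨k, by ring⟩ t]
    simp [neg_smul]
  have he : Summable fun k => f (2 * k) := hsumf.comp_injective fun a b => by omega
  have ho : Summable fun k => f (2 * k + 1) := hsumf.comp_injective fun a b => by omega
  rw [← tsum_even_add_odd he ho]
  simp only [hodd, tsum_zero, add_zero]
  -- split off k = 0
  have he' : Summable fun k => f (2 * (k + 1)) := he.comp_injective fun a b => by omega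
  have hsplit : ∑' k, f (2 * k) = f 0 + ∑' k, f (2 * (k + 1)) := by
    have := tsum_eq_zero_add' (f := fun k => f (2 * k)) (by simpa [mul_add] using he')
    simpa [mul_add] using this
  rw [hsplit]
  have hf0 : f 0 = (2 : ℝ) • (1 : Matrix (Fin 3) (Fin 3) ℝ) := by
    simp [hf, two_smul]
  -- even terms k ≥ 1
  have heven : ∀ k : ℕ, f (2 * (k + 1)) =
      (2 * (-1 : ℝ) ^ k * t ^ (2 * (k + 1)) / (Nat.factorial (2 * (k + 1)) : ℝ)) • A ^ 2 := by
    intro k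
    simp only [hf, smul_pow]
    rw [Even.neg_pow ⟨k + 1, by ring⟩ t, pow_two_mul A h k]
    simp only [smul_smul]
    rw [← add_smul]
    congr 1
    field_simp
    ring
  simp only [heven]
  -- scalar series sums to 2 - 2 cos t
  have hg := Real.hasSum_cos t
  have hgs : Summable fun n : ℕ => (-1 : ℝ) ^ n * t ^ (2 * n) / ↑(2 * n)! := hg.summable
  have hgs' : Summable fun k : ℕ => (-1 : ℝ) ^ (k + 1) * t ^ (2 * (k + 1)) / ↑(2 * (k + 1))! := by
    have := hgs.comp_injective (i := fun k => k + 1) (add_left_injective 1)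
    exact this
  have hc : Summable fun k : ℕ => 2 * (-1 : ℝ) ^ k * t ^ (2 * (k + 1)) / ↑(2 * (k + 1))! := by
    have := hgs'.mul_left (-2)
    convert this using 2 with k
    exacts [rfl, by ring]
  rw [Summable.tsum_smul_const hc]
  have hcos : Real.cos t = 1 + ∑' k : ℕ, (-1 : ℝ) ^ (k + 1) * t ^ (2 * (k + 1)) / ↑(2 * (k + 1))! := by
    rw [Real.cos_eq_tsum, tsum_eq_zero_add' hgs']
    norm_num
  have hcsum : (∑' k : ℕ, 2 * (-1 : ℝ) ^ k * t ^ (2 * (k + 1)) / ↑(2 * (k + 1))!) = 2 - 2 * Real.cos t := by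
    have h2 : (∑' k : ℕ, 2 * (-1 : ℝ) ^ k * t ^ (2 * (k + 1)) / ↑(2 * (k + 1))!) =
        ∑' k : ℕ, (-2) * ((-1 : ℝ) ^ (k + 1) * t ^ (2 * (k + 1)) / ↑(2 * (k + 1))!) := by
      congr 1; funext k; ring
    rw [h2, tsum_mul_left, hcos]
    ring
  rw [hcsum, hf0]

set_option maxHeartbeats 1000000 in
/-- The arithmetic mean of the seven sigma points `M = U Vᵀ` and
`Rᵢ(±θᵢ) = U exp(±θᵢ êᵢ) Vᵀ` equals `U D Vᵀ`, where `D = diag d` with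
`dᵢ = (3 + 2 cos θⱼ + 2 cos θₖ)/7` for `(i,j,k)` a cyclic permutation of `(1,2,3)`. -/
theorem sigma_points_mean (U V : Matrix (Fin 3) (Fin 3) ℝ)
    (hU : Uᵀ * U = 1 ∧ U.det = 1) (hV : Vᵀ * V = 1 ∧ V.det = 1)
    (θ : Fin 3 → ℝ) :
    ((1 : ℝ) / 7) • (U * Vᵀ +
        ∑ i : Fin 3, (U * NormedSpace.exp (θ i • hat (Pi.single i 1)) * Vᵀ +
          U * NormedSpace.exp ((-θ i) • hat (Pi.single i 1)) * Vᵀ)) =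
      U * Matrix.diagonal
          (fun i => (3 + 2 * Real.cos (θ (i + 1)) + 2 * Real.cos (θ (i + 2))) / 7) * Vᵀ := by
  have hp0 : (Pi.single (0:Fin 3) (1:ℝ)) = ![1,0,0] := by
    ext j; fin_cases j <;> simp [Pi.single_apply]
  have hp1 : (Pi.single (1:Fin 3) (1:ℝ)) = ![0,1,0] := by
    ext j; fin_cases j <;> simp [Pi.single_apply]
  have hp2 : (Pi.single (2:Fin 3) (1:ℝ)) = ![0,0,1] := by
    ext j; fin_cases j <;> simp [Pi.single_apply]
  have hs0 : hat (Pi.single (0:Fin 3) (1:ℝ)) = !![0,0,0;0,0,-1;0,1,0] := by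
    rw [hp0, hat]; norm_num [Matrix.cons_val_two, Matrix.vecHead, Matrix.vecTail]
  have hs1 : hat (Pi.single (1:Fin 3) (1:ℝ)) = !![0,0,1;0,0,0;-1,0,0] := by
    rw [hp1, hat]; norm_num [Matrix.cons_val_two, Matrix.vecHead, Matrix.vecTail]
  have hs2 : hat (Pi.single (2:Fin 3) (1:ℝ)) = !![0,-1,0;1,0,0;0,0,0] := by
    rw [hp2, hat]; norm_num [Matrix.cons_val_two, Matrix.vecHead, Matrix.vecTail]
  have hcube : ∀ i : Fin 3, (hat (Pi.single i 1)) ^ 3 = -(hat (Pi.single i 1)) := by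
    intro i
    fin_cases i
    · show hat (Pi.single (0:Fin 3) 1) ^ 3 = -hat (Pi.single (0:Fin 3) 1)
      rw [hs0]; ext a b
      fin_cases a <;> fin_cases b <;> norm_num [pow_succ, Matrix.mul_apply, Fin.sum_univ_three, Matrix.vecHead, Matrix.vecTail, Matrix.cons_val_two, Matrix.vecHead, Matrix.vecTail]
    · show hat (Pi.single (1:Fin 3) 1) ^ 3 = -hat (Pi.single (1:Fin 3) 1)
      rw [hs1]; ext a b
      fin_cases a <;> fin_cases b <;> norm_num [pow_succ, Matrix.mul_apply, Fin.sum_univ_three, Matrix.vecHead, Matrix.vecTail, Matrix.cons_val_two, Matrix.vecHead, Matrix.vecTail]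
    · show hat (Pi.single (2:Fin 3) 1) ^ 3 = -hat (Pi.single (2:Fin 3) 1)
      rw [hs2]; ext a b
      fin_cases a <;> fin_cases b <;> norm_num [pow_succ, Matrix.mul_apply, Fin.sum_univ_three, Matrix.vecHead, Matrix.vecTail, Matrix.cons_val_two, Matrix.vecHead, Matrix.vecTail]
  have key : ∀ i : Fin 3,
      NormedSpace.exp (θ i • hat (Pi.single i 1)) + NormedSpace.exp ((-θ i) • hat (Pi.single i 1)) =
        (2 : ℝ) • (1 : Matrix (Fin 3) (Fin 3) ℝ) + (2 - 2 * Real.cos (θ i)) • (hat (Pi.single i 1)) ^ 2 :=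
    fun i => exp_pair _ (hcube i) (θ i)
  have hsum : ∀ i : Fin 3,
      U * NormedSpace.exp (θ i • hat (Pi.single i 1)) * Vᵀ +
        U * NormedSpace.exp ((-θ i) • hat (Pi.single i 1)) * Vᵀ =
      U * ((2 : ℝ) • (1 : Matrix (Fin 3) (Fin 3) ℝ) + (2 - 2 * Real.cos (θ i)) • (hat (Pi.single i 1)) ^ 2) * Vᵀ := by
    intro i
    rw [← key i]
    noncomm_ring
  simp only [hsum]
  have hcomb : U * Vᵀ + ∑ i : Fin 3,
      U * ((2 : ℝ) • (1 : Matrix (Fin 3) (Fin 3) ℝ) + (2 - 2 * Real.cos (θ i)) • (hat (Pi.single i 1)) ^ 2) * Vᵀ =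
      U * ((1 : Matrix (Fin 3) (Fin 3) ℝ) + ∑ i : Fin 3,
        ((2 : ℝ) • (1 : Matrix (Fin 3) (Fin 3) ℝ) + (2 - 2 * Real.cos (θ i)) • (hat (Pi.single i 1)) ^ 2)) * Vᵀ := by
    simp only [Matrix.mul_add, Matrix.add_mul, Matrix.mul_one, Matrix.mul_sum, Finset.sum_mul]
  rw [hcomb, ← Matrix.smul_mul, ← Matrix.mul_smul]
  congr 2
  have hd : Matrix.diagonal
      (fun i => (3 + 2 * Real.cos (θ (i + 1)) + 2 * Real.cos (θ (i + 2))) / 7) =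
      !![(3 + 2 * Real.cos (θ 1) + 2 * Real.cos (θ 2)) / 7, 0, 0;
         0, (3 + 2 * Real.cos (θ 2) + 2 * Real.cos (θ 0)) / 7, 0;
         0, 0, (3 + 2 * Real.cos (θ 0) + 2 * Real.cos (θ 1)) / 7] := by
    ext a b
    fin_cases a <;> fin_cases b <;> simp [Matrix.diagonal_apply, Fin.ext_iff] <;> rfl
  rw [hd]
  ext a b
  simp only [Fin.sum_univ_three, hs0, hs1, hs2]
  fin_cases a <;> fin_cases b <;>
    norm_num [pow_two, Matrix.mul_apply, Fin.sum_univ_three, Fin.ext_iff, Matrix.vecHead,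
      Matrix.vecTail, Matrix.diagonal_apply, Matrix.one_apply, Matrix.add_apply,
      Matrix.smul_apply, Matrix.cons_val_two] <;> ring
end
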